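/- For every pair of complementary matrices (m₁,n₁),(m₂,n₂) (a PCM), the element (det(m₁) + det(n₁)) − (det(m₂) + det(n₂)) lies in the kernel of φ_W; that is, the ideal Λ₂ is a subideal of I(X). -/

import Mathlib

open MvPolynomial

/-! Setup following "Rees algebras of ideals submaximally generated by quadrics".
`R = K[x_1, …, x_d]`, `I = (x_i x_j (i ≠ j), x_k^2 - x_d^2 (k ≠ d))`,
`W = K[w_{ij} : 1 ≤ i ≤ j ≤ d, (i,j) ≠ (d,d)]` with `w_{ij} = w_{ji}`, `w_{dd} = 0`,
`φ_W : W → R`, `w_{ij} ↦ g_{ij}`, `I(X) = ker φ_W`, and the candidate ideal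
`Λ = Λ₀ + Λ₁ + Λ₂` built from 2×2 minors of the symmetric matrix `M = (w_{ij})`. -/

/-- 1-based index set `{1, …, d}`. -/
abbrev Idx (d : ℕ) : Type := (Set.Icc 1 d : Set ℕ)

/-- Index set for the variables `w_{ij}`, `1 ≤ i ≤ j ≤ d`, `(i,j) ≠ (d,d)`. -/
abbrev SymIdx (d : ℕ) : Type :=
  {p : Idx d × Idx d // p.1 ≤ p.2 ∧ ¬(p.1.1 = d ∧ p.2.1 = d)}

/-- The entry `w_{ij}` of `M` as an element of `W`, with the conventions
`w_{ij} = w_{ji}` and `w_{dd} = 0`. -/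
noncomputable def wv (K : Type*) [Field K] (d : ℕ) (i j : Idx d) :
    MvPolynomial (SymIdx d) K :=
  if h : (min i j).1 = d ∧ (max i j).1 = d then 0
  else X (⟨(min i j, max i j), ⟨min_le_max, h⟩⟩ : SymIdx d)

/-- The last variable `x_d` of `R = K[x_1, …, x_d]`. -/
noncomputable def xd (K : Type*) [Field K] (d : ℕ) : MvPolynomial (Idx d) K :=
  if h : 1 ≤ d then X (⟨d, Set.mem_Icc.mpr ⟨h, le_rfl⟩⟩ : Idx d) else 0

/-- The quadrics `g_{ij} = x_i x_j` (for `i ≠ j`) and `g_{ii} = x_i ^ 2 - x_d ^ 2`. -/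
noncomputable def gq (K : Type*) [Field K] (d : ℕ) (i j : Idx d) : MvPolynomial (Idx d) K :=
  if i = j then X i ^ 2 - xd K d ^ 2 else X i * X j

/-- The `K`-algebra map `φ_W : W → R`, `w_{ij} ↦ g_{ij}`. -/
noncomputable def phiW (K : Type*) [Field K] (d : ℕ) :
    MvPolynomial (SymIdx d) K →ₐ[K] MvPolynomial (Idx d) K :=
  aeval (fun p : SymIdx d => gq K d p.1.1 p.1.2)

/-- `I(X) = ker φ_W`, the defining ideal of the special fiber ring `F(I)`. -/
noncomputable def IX (K : Type*) [Field K] (d : ℕ) : Ideal (MvPolynomial (SymIdx d) K) :=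
  RingHom.ker (phiW K d).toRingHom

/-- A `2 × 2` submatrix of the symmetric matrix `M = (w_{ij})`, recorded by its (ordered)
rows `r1 < r2` and columns `c1 < c2`. -/
structure Sub2 (d : ℕ) where
  r1 : Idx d
  r2 : Idx d
  c1 : Idx d
  c2 : Idx d
  hr : r1 < r2
  hc : c1 < c2

/-- The determinant of a `2 × 2` submatrix of `M`, i.e. the minor `[r1 r2 | c1 c2]`. -/
noncomputable def sdet (K : Type*) [Field K] (d : ℕ) (m : Sub2 d) :
    MvPolynomial (SymIdx d) K :=
  wv K d m.r1 m.c1 * wv K d m.r2 m.c2 - wv K d m.r1 m.c2 * wv K d m.r2 m.c1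

/-- The set of row indices of a `2 × 2` submatrix. -/
def Sub2.rows {d : ℕ} (m : Sub2 d) : Finset (Idx d) := {m.r1, m.r2}

/-- The set of column indices of a `2 × 2` submatrix. -/
def Sub2.cols {d : ℕ} (m : Sub2 d) : Finset (Idx d) := {m.c1, m.c2}

/-- `inA s m` says that the minor `det m` belongs to `A_s`: the row and column index
sets of `m` meet in exactly `s` indices (equivalently, `m` contains exactly `s`
diagonal entries of `M`). -/
def inA {d : ℕ} (s : ℕ) (m : Sub2 d) : Prop := (m.rows ∩ m.cols).card = s

/-- Two `2 × 2` submatrices of `M` are complementary: there is a `4 × 4` principal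
submatrix (with index set `S`, `|S| = 4`) containing both, in which they share no rows
and no columns. -/
def ComplSub2 {d : ℕ} (m n : Sub2 d) : Prop :=
  ∃ S : Finset (Idx d), S.card = 4 ∧ m.rows ∪ n.rows ⊆ S ∧ m.cols ∪ n.cols ⊆ S ∧
    Disjoint m.rows n.rows ∧ Disjoint m.cols n.cols

/-- `δ(m) = 0` if the diagonal entry of `M` appearing in `m` lies on the diagonal of `m`,
and `δ(m) = 1` if it lies on the antidiagonal (intended for minors in `A₁`). -/
def delta {d : ℕ} (m : Sub2 d) : ℕ := if m.r1 = m.c1 ∨ m.r2 = m.c2 then 0 else 1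

/-- `Λ₀`: the ideal generated by the minors in `A₀`. -/
noncomputable def Lam0 (K : Type*) [Field K] (d : ℕ) : Ideal (MvPolynomial (SymIdx d) K) :=
  Ideal.span {f | ∃ m : Sub2 d, inA 0 m ∧ f = sdet K d m}

/-- `Λ₁`: generated by `det m - (-1)^(δ m + δ n) * det n` over complementary pairs in `A₁`. -/
noncomputable def Lam1 (K : Type*) [Field K] (d : ℕ) : Ideal (MvPolynomial (SymIdx d) K) :=
  Ideal.span {f | ∃ m n : Sub2 d, inA 1 m ∧ inA 1 n ∧ ComplSub2 m n ∧
    f = sdet K d m - (-1 : MvPolynomial (SymIdx d) K) ^ (delta m + delta n) * sdet K d n}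

/-- `Λ₂`: generated by `(det m1 + det n1) - (det m2 + det n2)` over pairs of complementary
matrices (PCMs), all four lying in a common `4 × 4` principal submatrix. -/
noncomputable def Lam2 (K : Type*) [Field K] (d : ℕ) : Ideal (MvPolynomial (SymIdx d) K) :=
  Ideal.span {f | ∃ m1 n1 m2 n2 : Sub2 d, inA 2 m1 ∧ inA 2 n1 ∧ inA 2 m2 ∧ inA 2 n2 ∧
    ComplSub2 m1 n1 ∧ ComplSub2 m2 n2 ∧
    (∃ S : Finset (Idx d), S.card = 4 ∧
      m1.rows ∪ m1.cols ∪ n1.rows ∪ n1.cols ∪ m2.rows ∪ m2.cols ∪ n2.rows ∪ n2.cols ⊆ S) ∧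
    f = (sdet K d m1 + sdet K d n1) - (sdet K d m2 + sdet K d n2)}

/-- The candidate ideal `Λ = Λ₀ + Λ₁ + Λ₂`. -/
noncomputable def Lam (K : Type*) [Field K] (d : ℕ) : Ideal (MvPolynomial (SymIdx d) K) :=
  Lam0 K d + Lam1 K d + Lam2 K d

/-- The Hilbert function of an ideal `N ⊆ W` in degree `i`:
the `K`-dimension of the degree-`i` homogeneous component of `N`. -/
noncomputable def HFI (K : Type*) [Field K] (d : ℕ)
    (N : Ideal (MvPolynomial (SymIdx d) K)) (i : ℕ) : ℕ :=
  Module.finrank K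
    ↥(Submodule.restrictScalars K N ⊓ homogeneousSubmodule (SymIdx d) K i)

lemma rows_card {d : ℕ} (m : Sub2 d) : m.rows.card = 2 :=
  Finset.card_pair m.hr.ne

lemma cols_card {d : ℕ} (m : Sub2 d) : m.cols.card = 2 :=
  Finset.card_pair m.hc.ne

/-- A minor in `A₂` is a principal minor. -/
lemma inA2_eq {d : ℕ} (m : Sub2 d) (h : inA 2 m) : m.c1 = m.r1 ∧ m.c2 = m.r2 := by
  unfold inA at h
  have h1 : m.rows ∩ m.cols = m.rows :=
    Finset.eq_of_subset_of_card_le Finset.inter_subset_left (by rw [h, rows_card])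
  have h2 : m.rows ∩ m.cols = m.cols :=
    Finset.eq_of_subset_of_card_le Finset.inter_subset_right (by rw [h, cols_card])
  have he : m.rows = m.cols := h1.symm.trans h2
  have hc1 : m.c1 = m.r1 ∨ m.c1 = m.r2 := by
    have : m.c1 ∈ m.rows := by rw [he]; simp [Sub2.cols]
    simpa [Sub2.rows] using this
  have hc2 : m.c2 = m.r1 ∨ m.c2 = m.r2 := by
    have : m.c2 ∈ m.rows := by rw [he]; simp [Sub2.cols]
    simpa [Sub2.rows] using this
  have hr : (m.r1 : ℕ) < m.r2 := m.hr
  have hc : (m.c1 : ℕ) < m.c2 := m.hc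
  simp only [Subtype.ext_iff] at hc1 hc2 ⊢
  omega

lemma phi_wv (K : Type*) [Field K] (d : ℕ) (i j : Idx d) :
    phiW K d (wv K d i j) =
      if (min i j).1 = d ∧ (max i j).1 = d then 0
      else gq K d (min i j) (max i j) := by
  rw [wv]
  split_ifs with h
  · simp
  · simp [phiW, aeval_X]

lemma xd_eq (K : Type*) [Field K] {d : ℕ} (hd : 1 ≤ d) (j : Idx d) (hj : (j : ℕ) = d) :
    (X j : MvPolynomial (Idx d) K) = xd K d := by
  rw [xd, dif_pos hd]
  congr 1
  exact Subtype.ext hj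

/-- `φ_W` of a principal `2×2` minor at `{i, j}`. -/
lemma phi_sdet_diag (K : Type*) [Field K] {d : ℕ} (hd : 4 ≤ d) (m : Sub2 d)
    (h1 : m.c1 = m.r1) (h2 : m.c2 = m.r2) :
    phiW K d (sdet K d m) =
      xd K d ^ 4 - xd K d ^ 2 * (X m.r1 ^ 2 + X m.r2 ^ 2) := by
  set i := m.r1 with hi
  set j := m.r2 with hj
  have hij : i < j := m.hr
  have hij' : (i : ℕ) < (j : ℕ) := hij
  have hjd' : (j : ℕ) ≤ d := (Set.mem_Icc.mp j.2).2
  have hid : (i : ℕ) ≠ d := by omega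
  have e1 : phiW K d (wv K d i i) = X i ^ 2 - xd K d ^ 2 := by
    rw [phi_wv]
    simp [hid, gq]
  have e3 : phiW K d (wv K d i j) = X i * X j := by
    rw [phi_wv, min_eq_left hij.le, max_eq_right hij.le]
    simp [hid, gq, hij.ne]
  have e4 : phiW K d (wv K d j i) = X i * X j := by
    rw [phi_wv, min_eq_right hij.le, max_eq_left hij.le]
    simp [hid, gq, hij.ne]
  rw [sdet, h1, h2, ← hi, ← hj]
  by_cases hjd : (j : ℕ) = d
  · have e2 : phiW K d (wv K d j j) = 0 := by
      rw [phi_wv]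
      simp [hjd]
    have ej : (X j : MvPolynomial (Idx d) K) = xd K d := xd_eq K (by omega) j hjd
    rw [map_sub, map_mul, map_mul, e1, e2, e3, e4, ← ej]
    ring
  · have e2 : phiW K d (wv K d j j) = X j ^ 2 - xd K d ^ 2 := by
      rw [phi_wv]
      simp [hjd, gq]
    rw [map_sub, map_mul, map_mul, e1, e2, e3, e4]
    ring

/-- For every PCM `(m₁,n₁),(m₂,n₂)`, the element `(det m₁ + det n₁) - (det m₂ + det n₂)`
lies in `ker φ_W`; i.e. `Λ₂ ⊆ I(X)`. -/
theorem Lam2_le_fiber_ideal (K : Type*) [Field K] [CharZero K] (d : ℕ) (hd : 4 ≤ d) :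
    Lam2 K d ≤ IX K d := by
  rw [Lam2]
  apply Ideal.span_le.mpr
  rintro f ⟨m1, n1, m2, n2, h1, h2, h3, h4, hc1, hc2, ⟨S, hS, hsub⟩, rfl⟩
  obtain ⟨a1, b1⟩ := inA2_eq m1 h1
  obtain ⟨a2, b2⟩ := inA2_eq n1 h2
  obtain ⟨a3, b3⟩ := inA2_eq m2 h3
  obtain ⟨a4, b4⟩ := inA2_eq n2 h4
  obtain ⟨_, _, _, _, hd1, _⟩ := hc1
  obtain ⟨_, _, _, _, hd2, _⟩ := hc2
  have hu1 : m1.rows ∪ n1.rows = S := by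
    apply Finset.eq_of_subset_of_card_le
    · intro x hx
      apply hsub
      simp only [Finset.mem_union] at hx ⊢
      tauto
    · rw [hS, Finset.card_union_of_disjoint hd1, rows_card, rows_card]
  have hu2 : m2.rows ∪ n2.rows = S := by
    apply Finset.eq_of_subset_of_card_le
    · intro x hx
      apply hsub
      simp only [Finset.mem_union] at hx ⊢
      tauto
    · rw [hS, Finset.card_union_of_disjoint hd2, rows_card, rows_card]
  have s1 : (X m1.r1 ^ 2 + X m1.r2 ^ 2) + (X n1.r1 ^ 2 + X n1.r2 ^ 2)
      = ∑ s ∈ S, (X s : MvPolynomial (Idx d) K) ^ 2 := by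
    rw [← hu1, Finset.sum_union hd1, Sub2.rows, Sub2.rows,
      Finset.sum_pair m1.hr.ne, Finset.sum_pair n1.hr.ne]
  have s2 : (X m2.r1 ^ 2 + X m2.r2 ^ 2) + (X n2.r1 ^ 2 + X n2.r2 ^ 2)
      = ∑ s ∈ S, (X s : MvPolynomial (Idx d) K) ^ 2 := by
    rw [← hu2, Finset.sum_union hd2, Sub2.rows, Sub2.rows,
      Finset.sum_pair m2.hr.ne, Finset.sum_pair n2.hr.ne]
  simp only [SetLike.mem_coe]
  rw [IX, RingHom.mem_ker]
  show phiW K d _ = 0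
  rw [map_sub, map_add, map_add, phi_sdet_diag K hd m1 a1 b1, phi_sdet_diag K hd n1 a2 b2,
    phi_sdet_diag K hd m2 a3 b3, phi_sdet_diag K hd n2 a4 b4]
  linear_combination xd K d ^ 2 * s2 - xd K d ^ 2 * s1
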